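/- Let n ≥ 5 and let B : ℝⁿ → (so(n))ⁿ be algebraically SO(n)-equivariant. Then there exists a function g : [0,∞) → ℝ such that for every x ∈ ℝⁿ, all indices μ, i, j: (B_μ(x))_{i,j} = g(|x|)·(δ_{j,μ} x_i − δ_{i,μ} x_j), where |x| is the Euclidean norm of x and δ is the Kronecker delta. -/

import Mathlib

open Matrix BigOperators
open scoped RealInnerProductSpace

noncomputable section

/-- Euclidean norm on `ℝⁿ`. -/
def nrm {n : ℕ} (x : Fin n → ℝ) : ℝ := Real.sqrt (∑ i, x i ^ 2)

section Aux

variable {n : ℕ}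

/-- generalized (signed) permutation matrix: columns `b` equal `s b • e_{σ b}`. -/
def gpm (σ : Equiv.Perm (Fin n)) (s : Fin n → ℝ) : Matrix (Fin n) (Fin n) ℝ :=
  Matrix.of fun a b => if a = σ b then s b else 0

lemma gpm_apply (σ : Equiv.Perm (Fin n)) (s : Fin n → ℝ) (a b : Fin n) :
    gpm σ s a b = if a = σ b then s b else 0 := rfl

lemma gpm_tmul (σ : Equiv.Perm (Fin n)) (s : Fin n → ℝ) (hs : ∀ k, s k = 1 ∨ s k = -1) :
    (gpm σ s)ᵀ * gpm σ s = 1 := by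
  ext a b
  rw [Matrix.mul_apply]
  simp only [Matrix.transpose_apply, gpm_apply]
  rw [Finset.sum_eq_single (σ a)]
  · by_cases h : a = b
    · subst h
      simp only [if_pos rfl, Matrix.one_apply_eq]
      rcases hs a with h | h <;> rw [h] <;> norm_num
    · have h2 : ¬ (σ a = σ b) := fun hc => h (σ.injective hc)
      simp [h2, Matrix.one_apply, h]
  · intro c _ hc
    have : ¬ (c = σ a) := hc
    simp [this]
  · intro h; exact absurd (Finset.mem_univ _) h

lemma gpm_eq (σ : Equiv.Perm (Fin n)) (s : Fin n → ℝ) :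
    gpm σ s = (σ⁻¹.permMatrix ℝ) * Matrix.diagonal s := by
  ext a b
  rw [Matrix.mul_diagonal]
  simp only [gpm_apply, Equiv.Perm.permMatrix, PEquiv.toMatrix_apply, Equiv.toPEquiv_apply,
    Option.mem_def, Option.some.injEq]
  by_cases h : a = σ b
  · rw [if_pos h, if_pos]; · ring
    rw [h]; simp
  · rw [if_neg h, if_neg, zero_mul]
    intro hc
    exact h (by rw [← hc]; simp)

lemma gpm_det (σ : Equiv.Perm (Fin n)) (s : Fin n → ℝ) :
    (gpm σ s).det = (Equiv.Perm.sign σ : ℝ) * ∏ k, s k := by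
  rw [gpm_eq, Matrix.det_mul, Matrix.det_permutation, Matrix.det_diagonal]
  simp

lemma gpm_mulVec (σ : Equiv.Perm (Fin n)) (s : Fin n → ℝ) (x : Fin n → ℝ) (a : Fin n) :
    (gpm σ s *ᵥ x) a = s (σ⁻¹ a) * x (σ⁻¹ a) := by
  rw [Matrix.mulVec, dotProduct]
  rw [Finset.sum_eq_single (σ⁻¹ a)]
  · rw [gpm_apply, if_pos (by simp)]
  · intro c _ hc
    rw [gpm_apply, if_neg, zero_mul]
    intro h; exact hc (by rw [h]; simp)
  · intro h; exact absurd (Finset.mem_univ _) h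

lemma master (B : (Fin n → ℝ) → Fin n → Matrix (Fin n) (Fin n) ℝ)
    (hequiv : ∀ Λ : Matrix (Fin n) (Fin n) ℝ, Λᵀ * Λ = 1 → Λ.det = 1 →
      ∀ (x : Fin n → ℝ) (μ : Fin n),
        B (Λ *ᵥ x) μ = ∑ ν, Λ⁻¹ ν μ • (Λ * B x ν * Λ⁻¹))
    (σ : Equiv.Perm (Fin n)) (s : Fin n → ℝ) (hs : ∀ k, s k = 1 ∨ s k = -1)
    (hdet : (gpm σ s).det = 1) (x : Fin n → ℝ) (μ i j : Fin n) :
    B (gpm σ s *ᵥ x) μ i j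
      = s (σ⁻¹ μ) * s (σ⁻¹ i) * s (σ⁻¹ j) * B x (σ⁻¹ μ) (σ⁻¹ i) (σ⁻¹ j) := by
  have hT : (gpm σ s)ᵀ * gpm σ s = 1 := gpm_tmul σ s hs
  have hinv : (gpm σ s)⁻¹ = (gpm σ s)ᵀ := Matrix.inv_eq_left_inv hT
  have h := hequiv (gpm σ s) hT hdet x μ
  rw [hinv] at h
  have h2 : B (gpm σ s *ᵥ x) μ i j
      = ∑ ν, (gpm σ s)ᵀ ν μ * (gpm σ s * B x ν * (gpm σ s)ᵀ) i j := by
    rw [h]; simp [Matrix.sum_apply]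
  rw [h2]
  rw [Finset.sum_eq_single (σ⁻¹ μ)]
  · have hμ : (gpm σ s)ᵀ (σ⁻¹ μ) μ = s (σ⁻¹ μ) := by
      rw [Matrix.transpose_apply, gpm_apply, if_pos (by simp)]
    rw [hμ]
    have hM : ∀ M : Matrix (Fin n) (Fin n) ℝ,
        (gpm σ s * M * (gpm σ s)ᵀ) i j = s (σ⁻¹ i) * s (σ⁻¹ j) * M (σ⁻¹ i) (σ⁻¹ j) := by
      intro M
      rw [Matrix.mul_apply]
      rw [Finset.sum_eq_single (σ⁻¹ j)]
      · rw [Matrix.transpose_apply, gpm_apply, if_pos (by simp), Matrix.mul_apply]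
        rw [Finset.sum_eq_single (σ⁻¹ i)]
        · rw [gpm_apply, if_pos (by simp)]; ring
        · intro c _ hc
          rw [gpm_apply, if_neg, zero_mul]
          intro hcon; exact hc (by rw [hcon]; simp)
        · intro hf; exact absurd (Finset.mem_univ _) hf
      · intro c _ hc
        rw [Matrix.transpose_apply, gpm_apply, if_neg, mul_zero]
        intro hcon; exact hc (by rw [hcon]; simp)
      · intro hf; exact absurd (Finset.mem_univ _) hf
    rw [hM]; ring
  · intro c _ hc
    rw [Matrix.transpose_apply, gpm_apply, if_neg, zero_mul]
    intro hcon; exact hc (by rw [hcon]; simp)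
  · intro hf; exact absurd (Finset.mem_univ _) hf

lemma transport (B : (Fin n → ℝ) → Fin n → Matrix (Fin n) (Fin n) ℝ)
    (hequiv : ∀ Λ : Matrix (Fin n) (Fin n) ℝ, Λᵀ * Λ = 1 → Λ.det = 1 →
      ∀ (x : Fin n → ℝ) (μ : Fin n),
        B (Λ *ᵥ x) μ = ∑ ν, Λ⁻¹ ν μ • (Λ * B x ν * Λ⁻¹))
    (Λ : Matrix (Fin n) (Fin n) ℝ) (hT : Λᵀ * Λ = 1) (hdet : Λ.det = 1)
    (y x : Fin n → ℝ) (hx : Λ *ᵥ y = x) (g : ℝ)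
    (hstruct : ∀ ν a b, B y ν a b
      = g * ((if b = ν then 1 else 0) * y a - (if a = ν then 1 else 0) * y b))
    (μ i j : Fin n) :
    B x μ i j = g * ((if j = μ then 1 else 0) * x i - (if i = μ then 1 else 0) * x j) := by
  have hinv : Λ⁻¹ = Λᵀ := Matrix.inv_eq_left_inv hT
  have hRT : Λ * Λᵀ = 1 := mul_eq_one_comm.mpr hT
  have hyi : ∀ a, (Λ *ᵥ y) a = ∑ b, Λ a b * y b := by
    intro a; rw [Matrix.mulVec, dotProduct]
  have h := hequiv Λ hT hdet y μ
  rw [hinv, hx] at h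
  have inner1 : ∀ ν b, (Λ * B y ν) i b
      = g * ((if b = ν then 1 else 0) * x i - Λ i ν * y b) := by
    intro ν b
    rw [Matrix.mul_apply]
    have step : ∀ a, Λ i a * B y ν a b
        = g * (if b = ν then 1 else 0) * (Λ i a * y a)
          - g * y b * (if a = ν then Λ i a else 0) := by
      intro a
      rw [hstruct]
      by_cases hb : b = ν <;> by_cases ha : a = ν <;> simp [hb, ha] <;> ring
    rw [Finset.sum_congr rfl (fun a _ => step a), Finset.sum_sub_distrib,
      ← Finset.mul_sum, ← Finset.mul_sum, Finset.sum_ite_eq' Finset.univ ν (Λ i)]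
    rw [← hx, hyi i]
    simp only [Finset.mem_univ, if_pos]
    ring
  have inner2 : ∀ ν, (Λ * B y ν * Λᵀ) i j
      = g * (x i * Λ j ν - Λ i ν * x j) := by
    intro ν
    rw [Matrix.mul_apply]
    have step : ∀ b, (Λ * B y ν) i b * Λᵀ b j
        = g * x i * (if b = ν then Λ j b else 0) - g * Λ i ν * (Λ j b * y b) := by
      intro b
      rw [inner1, Matrix.transpose_apply]
      by_cases hb : b = ν <;> simp [hb] <;> ring
    rw [Finset.sum_congr rfl (fun b _ => step b), Finset.sum_sub_distrib,
      ← Finset.mul_sum, ← Finset.mul_sum, Finset.sum_ite_eq' Finset.univ ν (Λ j)]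
    have : ∑ b, Λ j b * y b = x j := by rw [← hyi, hx]
    rw [this]
    simp only [Finset.mem_univ, if_pos]
    ring
  have hBx : B x μ i j = ∑ ν, Λ μ ν * (Λ * B y ν * Λᵀ) i j := by
    rw [h]
    simp [Matrix.sum_apply, Matrix.transpose_apply]
  rw [hBx, Finset.sum_congr rfl (fun ν _ => by rw [inner2 ν])]
  have e1 : ∑ ν, Λ μ ν * (g * (x i * Λ j ν - Λ i ν * x j))
      = g * x i * (∑ ν, Λ μ ν * Λ j ν) - g * x j * (∑ ν, Λ μ ν * Λ i ν) := by
    rw [Finset.mul_sum, Finset.mul_sum, ← Finset.sum_sub_distrib]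
    exact Finset.sum_congr rfl (fun ν _ => by ring)
  rw [e1]
  have e2 : ∀ k, ∑ ν, Λ μ ν * Λ k ν = if μ = k then 1 else 0 := by
    intro k
    have : (Λ * Λᵀ) μ k = (1 : Matrix (Fin n) (Fin n) ℝ) μ k := by rw [hRT]
    rw [Matrix.mul_apply] at this
    simp only [Matrix.transpose_apply] at this
    rw [this, Matrix.one_apply]
  rw [e2 j, e2 i]
  have c1 : (if μ = j then (1:ℝ) else 0) = if j = μ then 1 else 0 := by
    by_cases h : μ = j <;> simp [h, eq_comm]
  have c2 : (if μ = i then (1:ℝ) else 0) = if i = μ then 1 else 0 := by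
    by_cases h : μ = i <;> simp [h, eq_comm]
  rw [c1, c2]; ring

lemma exists_fresh (hn : 5 ≤ n) (a b c d : Fin n) :
    ∃ q : Fin n, q ≠ a ∧ q ≠ b ∧ q ≠ c ∧ q ≠ d := by
  by_contra hcon
  push_neg at hcon
  have hsub : (Finset.univ : Finset (Fin n)) ⊆ {a, b, c, d} := by
    intro q _
    have := hcon q
    simp only [Finset.mem_insert, Finset.mem_singleton]
    tauto
  have h1 : ({a, b, c, d} : Finset (Fin n)).card ≤ 4 := by
    apply le_trans (Finset.card_insert_le _ _)
    have h2 : ({b, c, d} : Finset (Fin n)).card ≤ 3 := by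
      apply le_trans (Finset.card_insert_le _ _)
      have h3 : ({c, d} : Finset (Fin n)).card ≤ 2 := by
        apply le_trans (Finset.card_insert_le _ _)
        simp
      omega
    omega
  have := Finset.card_le_card hsub
  simp only [Finset.card_univ, Fintype.card_fin] at this
  omega

def pairSign (p q : Fin n) : Fin n → ℝ := fun k => if k = p ∨ k = q then -1 else 1

lemma pairSign_pm (p q k : Fin n) : pairSign p q k = 1 ∨ pairSign p q k = -1 := by
  unfold pairSign; by_cases h : k = p ∨ k = q <;> simp [h]

lemma pairSign_of_not (p q k : Fin n) (h1 : k ≠ p) (h2 : k ≠ q) : pairSign p q k = 1 := by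
  simp [pairSign, h1, h2]

lemma pairSign_left (p q : Fin n) : pairSign p q p = -1 := by simp [pairSign]

lemma pairSign_prod (p q : Fin n) (h : p ≠ q) : ∏ k, pairSign p q k = 1 := by
  have hsplit : ∀ k, pairSign p q k
      = (if k = p then (-1:ℝ) else 1) * (if k = q then (-1:ℝ) else 1) := by
    intro k
    unfold pairSign
    by_cases h1 : k = p <;> by_cases h2 : k = q
    · exact absurd (h1.symm.trans h2) h
    all_goals simp [h1, h2, h, Ne.symm h]
  rw [Finset.prod_congr rfl (fun k _ => hsplit k), Finset.prod_mul_distrib,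
    Finset.prod_ite_eq' Finset.univ p (fun _ => (-1:ℝ)),
    Finset.prod_ite_eq' Finset.univ q (fun _ => (-1:ℝ))]
  norm_num

lemma exists_sign (hn : 5 ≤ n) (z μ i j : Fin n) (hij : i ≠ j)
    (h1 : ¬(i = z ∧ j = μ)) (h2 : ¬(j = z ∧ i = μ)) :
    ∃ s : Fin n → ℝ, (∀ k, s k = 1 ∨ s k = -1) ∧ s z = 1 ∧ (∏ k, s k) = 1 ∧
      s μ * s i * s j = -1 := by
  obtain ⟨q, hqz, hqμ, hqi, hqj⟩ := exists_fresh hn z μ i j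
  by_cases hμi : μ = i
  · have hjz : j ≠ z := fun hc => h2 ⟨hc, hμi.symm⟩
    refine ⟨pairSign j q, pairSign_pm j q, ?_, pairSign_prod j q (Ne.symm hqj), ?_⟩
    · exact pairSign_of_not _ _ _ (Ne.symm hjz) (Ne.symm hqz)
    · rw [hμi, pairSign_of_not j q i hij (Ne.symm hqi), pairSign_left]
      ring
  · by_cases hμj : μ = j
    · have hiz : i ≠ z := fun hc => h1 ⟨hc, hμj.symm⟩
      refine ⟨pairSign i q, pairSign_pm i q, ?_, pairSign_prod i q (Ne.symm hqi), ?_⟩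
      · exact pairSign_of_not _ _ _ (Ne.symm hiz) (Ne.symm hqz)
      · rw [hμj, pairSign_of_not i q j hij.symm (Ne.symm hqj), pairSign_left]
        ring
    · by_cases hμz : μ = z
      · have hiz : i ≠ z := fun hc => hμi (hμz.trans hc.symm)
        have hjz : j ≠ z := fun hc => hμj (hμz.trans hc.symm)
        refine ⟨pairSign i q, pairSign_pm i q, ?_, pairSign_prod i q (Ne.symm hqi), ?_⟩
        · exact pairSign_of_not _ _ _ (Ne.symm hiz) (Ne.symm hqz)
        · rw [hμz, pairSign_of_not i q z (Ne.symm hiz) (Ne.symm hqz),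
            pairSign_of_not i q j hij.symm (Ne.symm hqj), pairSign_left]
          ring
      · refine ⟨pairSign μ q, pairSign_pm μ q, ?_, pairSign_prod μ q (Ne.symm hqμ), ?_⟩
        · exact pairSign_of_not _ _ _ (fun hc => hμz hc.symm) (Ne.symm hqz)
        · rw [pairSign_of_not μ q i (Ne.symm hμi) (Ne.symm hqi),
            pairSign_of_not μ q j (Ne.symm hμj) (Ne.symm hqj), pairSign_left]
          ring

lemma exists_sign₀ (hn : 5 ≤ n) (μ i j : Fin n) (hij : i ≠ j) :
    ∃ s : Fin n → ℝ, (∀ k, s k = 1 ∨ s k = -1) ∧ (∏ k, s k) = 1 ∧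
      s μ * s i * s j = -1 := by
  obtain ⟨z, hzμ, hzi, hzj, _⟩ := exists_fresh hn μ i j j
  obtain ⟨s, hs1, _, hs3, hs4⟩ := exists_sign hn z μ i j hij
    (fun hc => hzi hc.1.symm) (fun hc => hzj hc.1.symm)
  exact ⟨s, hs1, hs3, hs4⟩

lemma exists_rotation (x : Fin n → ℝ) (r : ℝ) (hr : 0 < r)
    (hr2 : ∑ i, x i ^ 2 = r ^ 2) (z o : Fin n) (hzo : o ≠ z) :
    ∃ Λ : Matrix (Fin n) (Fin n) ℝ, Λᵀ * Λ = 1 ∧ Λ.det = 1 ∧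
      Λ *ᵥ (fun i => if i = z then r else 0) = x := by
  classical
  set u : EuclideanSpace ℝ (Fin n) := WithLp.toLp 2 (fun i => x i / r) with hu
  have hnorm : (inner ℝ u u : ℝ) = 1 := by
    simp only [PiLp.inner_apply, RCLike.inner_apply, conj_trivial, hu]
    have : ∀ i, x i / r * (x i / r) = x i ^ 2 / r ^ 2 := by
      intro i; field_simp
    rw [Finset.sum_congr rfl (fun i _ => this i), ← Finset.sum_div, hr2]
    field_simp
  have hON : Orthonormal ℝ (Set.restrict {z} (fun _ : Fin n => u)) := by
    constructor
    · rintro ⟨i, hi⟩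
      have : ‖u‖ ^ 2 = 1 := by
        rw [← real_inner_self_eq_norm_sq, hnorm]
      have hnn : ‖u‖ = 1 := by nlinarith [norm_nonneg u]
      exact hnn
    · rintro ⟨i, hi⟩ ⟨j, hj⟩ hij
      exfalso
      apply hij
      simp only [Set.mem_singleton_iff] at hi hj
      subst hi; subst hj; rfl
  obtain ⟨b, hb⟩ := hON.exists_orthonormalBasis_extension_of_card_eq
    (by simp)
  have hbz : b z = u := hb z rfl
  set Λ₀ : Matrix (Fin n) (Fin n) ℝ := Matrix.of (fun a c => b c a) with hΛ₀
  have hT0 : Λ₀ᵀ * Λ₀ = 1 := by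
    ext a c
    rw [Matrix.mul_apply]
    have := orthonormal_iff_ite.mp b.orthonormal a c
    simp only [PiLp.inner_apply, RCLike.inner_apply, conj_trivial] at this
    simp only [Matrix.transpose_apply, hΛ₀, Matrix.of_apply, Matrix.one_apply]
    rw [← this]
    exact Finset.sum_congr rfl (fun _ _ => mul_comm _ _)
  have hdet0 : Λ₀.det = 1 ∨ Λ₀.det = -1 := by
    have h1 : Λ₀.det * Λ₀.det = 1 := by
      have := congrArg Matrix.det hT0
      rwa [Matrix.det_mul, Matrix.det_transpose, Matrix.det_one] at this
    exact mul_self_eq_one_iff.mp h1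
  set ε : Fin n → ℝ := fun k => if k = o then Λ₀.det else 1 with hε
  have hε2 : ∀ k, ε k * ε k = 1 := by
    intro k
    by_cases h : k = o <;> rcases hdet0 with hd | hd <;> simp [hε, h, hd]
  refine ⟨Λ₀ * Matrix.diagonal ε, ?_, ?_, ?_⟩
  · rw [Matrix.transpose_mul, Matrix.diagonal_transpose, Matrix.mul_assoc,
      ← Matrix.mul_assoc Λ₀ᵀ, hT0, Matrix.one_mul, Matrix.diagonal_mul_diagonal]
    rw [show (fun k => ε k * ε k) = fun _ => (1:ℝ) from funext hε2]
    exact Matrix.diagonal_one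
  · rw [Matrix.det_mul, Matrix.det_diagonal]
    rw [Finset.prod_ite_eq' Finset.univ o (fun _ => Λ₀.det)]
    simp only [Finset.mem_univ, if_pos]
    rcases hdet0 with hd | hd <;> rw [hd] <;> norm_num
  · rw [← Matrix.mulVec_mulVec]
    have hDy : Matrix.diagonal ε *ᵥ (fun i => if i = z then r else 0)
        = (fun i => if i = z then r else 0) := by
      funext a
      rw [Matrix.mulVec_diagonal]
      by_cases h : a = z
      · simp [h, hε, Ne.symm hzo]
      · simp [h]
    rw [hDy]
    funext a
    rw [Matrix.mulVec, dotProduct, Finset.sum_eq_single z]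
    · rw [if_pos rfl, hΛ₀]
      show b z a * r = x a
      rw [hbz, hu]
      show x a / r * r = x a
      field_simp
    · intro c _ hc; simp [hc]
    · intro h; exact absurd (Finset.mem_univ _) h

/-- the reference vector `r • e_z`. -/
def yv (z : Fin n) (r : ℝ) : Fin n → ℝ := fun i => if i = z then r else 0

end Aux

theorem stmt6 (n : ℕ) (hn : 5 ≤ n)
    (B : (Fin n → ℝ) → Fin n → Matrix (Fin n) (Fin n) ℝ)
    (hskew : ∀ x μ, (B x μ)ᵀ = -(B x μ))
    (hequiv : ∀ Λ : Matrix (Fin n) (Fin n) ℝ, Λᵀ * Λ = 1 → Λ.det = 1 →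
      ∀ (x : Fin n → ℝ) (μ : Fin n),
        B (Λ *ᵥ x) μ = ∑ ν, Λ⁻¹ ν μ • (Λ * B x ν * Λ⁻¹)) :
    ∃ g : ℝ → ℝ, ∀ (x : Fin n → ℝ) (μ i j : Fin n),
      (B x μ) i j = g (nrm x) *
        ((if j = μ then 1 else 0) * x i - (if i = μ then 1 else 0) * x j) := by
  classical
  set z : Fin n := ⟨0, by omega⟩ with hz
  set o : Fin n := ⟨1, by omega⟩ with ho
  have hzo : z ≠ o := by simp [hz, ho, Fin.ext_iff]
  -- pointwise skew-symmetry
  have hsk : ∀ x μ i j, B x μ j i = -(B x μ i j) := by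
    intro x μ i j
    have := congrFun (congrFun (hskew x μ) i) j
    simpa using this
  have hdiag : ∀ x μ i, B x μ i i = 0 := by
    intro x μ i
    have := hsk x μ i i
    linarith
  -- det of gpm with σ = 1
  have hdet1 : ∀ s : Fin n → ℝ, (∏ k, s k) = 1 → (gpm 1 s).det = 1 := by
    intro s hsp
    rw [gpm_det, hsp]
    simp
  -- B vanishes at the origin
  have Bzero : ∀ μ i j, B (0 : Fin n → ℝ) μ i j = 0 := by
    intro μ i j
    by_cases hij : i = j
    · subst hij; exact hdiag _ μ i
    · obtain ⟨s, hs1, hsp, hsv⟩ := exists_sign₀ hn μ i j hij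
      have hm := master B hequiv 1 s hs1 (hdet1 s hsp) 0 μ i j
      rw [Matrix.mulVec_zero] at hm
      simp only [inv_one, Equiv.Perm.coe_one, id_eq] at hm
      rw [hsv] at hm
      linarith
  -- the candidate function
  set g : ℝ → ℝ := fun r => B (yv z r) o z o / r with hg
  have hy0 : yv z (0:ℝ) = (0 : Fin n → ℝ) := by
    funext i; simp [yv]
  -- fixed-point sign relations at yv z r
  have hfix : ∀ (r : ℝ) (s : Fin n → ℝ), (∀ k, s k = 1 ∨ s k = -1) → s z = 1 →
      (∏ k, s k) = 1 → ∀ μ i j, B (yv z r) μ i j = s μ * s i * s j * B (yv z r) μ i j := by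
    intro r s hs1 hsz hsp μ i j
    have hv : gpm 1 s *ᵥ yv z r = yv z r := by
      funext a
      rw [gpm_mulVec]
      simp only [inv_one, Equiv.Perm.coe_one, id_eq]
      by_cases h : a = z
      · simp [yv, h, hsz]
      · simp [yv, h]
    have hm := master B hequiv 1 s hs1 (hdet1 s hsp) (yv z r) μ i j
    rw [hv] at hm
    simpa using hm
  -- swap relation: all "c_μ" agree
  have hswap : ∀ (r : ℝ) (μ : Fin n), μ ≠ z → μ ≠ o →
      B (yv z r) μ z μ = B (yv z r) o z o := by
    intro r μ hμz hμo
    set σ : Equiv.Perm (Fin n) := Equiv.swap μ o with hσ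
    set s : Fin n → ℝ := fun k => if k = o then (-1:ℝ) else 1 with hs
    have hs1 : ∀ k, s k = 1 ∨ s k = -1 := by
      intro k; by_cases h : k = o <;> simp [hs, h]
    have hsz : s z = 1 := by simp [hs, hzo]
    have hdet : (gpm σ s).det = 1 := by
      rw [gpm_det, hσ, Equiv.Perm.sign_swap hμo, hs]
      rw [Finset.prod_ite_eq' Finset.univ o (fun _ => (-1:ℝ))]
      simp
    have hσinv : σ⁻¹ = σ := Equiv.swap_inv μ o
    have hσz : σ z = z :=
      Equiv.swap_apply_of_ne_of_ne (Ne.symm hμz) hzo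
    have hv : gpm σ s *ᵥ yv z r = yv z r := by
      funext a
      rw [gpm_mulVec, hσinv]
      by_cases h : a = z
      · subst h
        rw [hσz, hsz]
        simp [yv]
      · have hne : σ a ≠ z := by
          intro hc
          exact h (by rw [← hσz] at hc; exact σ.injective hc)
        simp [yv, hne, h]
    have hm := master B hequiv σ s hs1 hdet (yv z r) μ z μ
    rw [hv, hσinv] at hm
    have hσμ : σ μ = o := Equiv.swap_apply_left μ o
    rw [hσμ, hσz, hsz] at hm
    have hso : s o = -1 := by simp [hs]
    rw [hso] at hm
    simpa using hm
  -- the key constant relation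
  have K : ∀ (r : ℝ) (μ : Fin n), μ ≠ z → B (yv z r) μ z μ = g r * r := by
    intro r μ hμz
    by_cases hr : r = 0
    · subst hr
      rw [hy0, Bzero, mul_zero]
    · have hoz : B (yv z r) μ z μ = B (yv z r) o z o := by
        by_cases hμo : μ = o
        · rw [hμo]
        · exact hswap r μ hμz hμo
      rw [hoz, hg]
      rw [div_mul_cancel₀ _ hr]
  -- full structure at the reference points
  have P : ∀ (r : ℝ) (μ i j : Fin n), B (yv z r) μ i j
      = g r * ((if j = μ then 1 else 0) * (yv z r) i - (if i = μ then 1 else 0) * (yv z r) j) := by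
    intro r μ i j
    by_cases hij : i = j
    · subst hij
      rw [hdiag, sub_self, mul_zero]
    · by_cases hc1 : i = z ∧ j = μ
      · obtain ⟨hi, hj⟩ := hc1
        subst hi; subst hj
        have hjz : j ≠ z := fun h => hij h.symm
        rw [K r j hjz]
        have h1 : (yv z r) z = r := by simp [yv]
        have h2 : (yv z r) j = 0 := by simp [yv, hjz]
        rw [h1, h2, if_pos rfl, if_neg (Ne.symm hjz)]
        ring
      · by_cases hc2 : j = z ∧ i = μ
        · obtain ⟨hj, hi⟩ := hc2
          subst hj; subst hi
          have hiz : i ≠ z := hij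
          rw [hsk (yv z r) i z i, K r i hiz]
          have h1 : (yv z r) z = r := by simp [yv]
          have h2 : (yv z r) i = 0 := by simp [yv, hiz]
          rw [h1, h2, if_pos rfl, if_neg (Ne.symm hiz)]
          ring
        · obtain ⟨s, hs1, hsz, hsp, hsv⟩ := exists_sign hn z μ i j hij hc1 hc2
          have hm := hfix r s hs1 hsz hsp μ i j
          rw [hsv] at hm
          have hL0 : B (yv z r) μ i j = 0 := by linarith
          rw [hL0]
          have ht1 : (if j = μ then (1:ℝ) else 0) * (yv z r) i = 0 := by
            by_cases h : j = μ
            · have hiz : i ≠ z := fun hc => hc1 ⟨hc, h⟩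
              simp [yv, hiz]
            · simp [h]
          have ht2 : (if i = μ then (1:ℝ) else 0) * (yv z r) j = 0 := by
            by_cases h : i = μ
            · have hjz : j ≠ z := fun hc => hc2 ⟨hc, h⟩
              simp [yv, hjz]
            · simp [h]
          rw [ht1, ht2]
          ring
  -- conclusion
  refine ⟨g, ?_⟩
  intro x μ i j
  by_cases hx : x = 0
  · subst hx
    rw [Bzero]
    simp
  · have hS : (0:ℝ) < ∑ i, x i ^ 2 := by
      obtain ⟨i0, hi0⟩ := Function.ne_iff.mp hx
      apply Finset.sum_pos' (fun i _ => sq_nonneg (x i))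
      exact ⟨i0, Finset.mem_univ i0, pow_two_pos_of_ne_zero hi0⟩
    have hrpos : 0 < nrm x := Real.sqrt_pos.mpr hS
    have hr2 : ∑ i, x i ^ 2 = (nrm x) ^ 2 := by
      rw [nrm, Real.sq_sqrt (le_of_lt hS)]
    obtain ⟨Λ, hT, hdet, hΛx⟩ := exists_rotation x (nrm x) hrpos hr2 z o (Ne.symm hzo)
    exact transport B hequiv Λ hT hdet (yv z (nrm x)) x hΛx (g (nrm x)) (P (nrm x)) μ i j
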